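/- For every integer n ≥ 16 there exist positive integers r₁ and r₂, an irredundant mixed orthogonal array IrMOA(r₁, 5+n, 3⁵2^n, 3), and an irredundant mixed orthogonal array IrMOA(r₂, 4+n, 3⁴2^n, 3). -/

import Mathlib

open Finset Function

/-- The Hamming distance between two rows of an array: the number of columns
in which the rows differ. -/
def hamDist {ι κ : Type*} [Fintype κ] (A : ι → κ → ℕ) (i i' : ι) : ℕ :=
  (Finset.univ.filter fun j => A i j ≠ A i' j).card

/-- `MD(A)`: the minimum Hamming distance over all pairs of distinct rows. -/
noncomputable def minDist {ι κ : Type*} [Fintype κ] (A : ι → κ → ℕ) : ℕ :=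
  sInf {n | ∃ i i', i ≠ i' ∧ hamDist A i i' = n}

/-- `A` is a mixed orthogonal array of strength `k` (rows indexed by `ι`,
columns by `κ`, column `j` taking values in `{0, …, lv j − 1}`): in the
subarray given by any choice of at most `k` columns, every tuple of symbols
occurs equally often as a row, namely (number of rows)/(product of the levels
of the chosen columns) times. -/
def IsMOA {ι κ : Type*} [Fintype ι] [Fintype κ] [DecidableEq κ]
    (A : ι → κ → ℕ) (lv : κ → ℕ) (k : ℕ) : Prop :=
  (∀ i j, A i j < lv j) ∧
  ∀ S : Finset κ, S.card ≤ k → ∀ x : κ → ℕ, (∀ j ∈ S, x j < lv j) →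
    (Finset.univ.filter fun i : ι => ∀ j ∈ S, A i j = x j).card * ∏ j ∈ S, lv j
      = Fintype.card ι

/-- An irredundant mixed orthogonal array of strength `k`: an MOA of strength
`k` any two distinct rows of which have Hamming distance at least `k+1`. -/
def IsIrMOA {ι κ : Type*} [Fintype ι] [Fintype κ] [DecidableEq κ]
    (A : ι → κ → ℕ) (lv : κ → ℕ) (k : ℕ) : Prop :=
  IsMOA A lv k ∧ ∀ i i' : ι, i ≠ i' → k + 1 ≤ hamDist A i i'

/-- A difference scheme `D(r, c, d)`: an `r × c` matrix over `ℤ_d` such that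
for any two distinct columns the `r` differences of corresponding entries
take each value of `ℤ_d` exactly `r/d` times. -/
def IsDiffScheme {r c d : ℕ} (B : Fin r → Fin c → ZMod d) : Prop :=
  ∀ j j' : Fin c, j ≠ j' → ∀ g : ZMod d,
    (Finset.univ.filter fun i : Fin r => B i j - B i j' = g).card * d = r

section Helpers

/-- Fiber counting for surjective additive monoid homs on finite groups. -/
lemma card_fiber_mul {G H : Type*} [AddCommGroup G] [Fintype G] [DecidableEq G]
    [AddCommGroup H] [Fintype H] [DecidableEq H]
    (f : G →+ H) (hf : Function.Surjective f) (y : H) :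
    (univ.filter fun g => f g = y).card * Fintype.card H = Fintype.card G := by
  have hconst : ∀ y₁ y₂ : H,
      (univ.filter fun g => f g = y₁).card = (univ.filter fun g => f g = y₂).card := by
    intro y₁ y₂
    obtain ⟨g₀, hg₀⟩ := hf (y₂ - y₁)
    apply Finset.card_bij' (fun g _ => g + g₀) (fun g _ => g - g₀)
    · intro g hg
      simp only [mem_filter, mem_univ, true_and] at hg ⊢
      rw [map_add, hg, hg₀]; abel
    · intro g hg
      simp only [mem_filter, mem_univ, true_and] at hg ⊢
      rw [map_sub, hg, hg₀]; abel
    · intro g _; abel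
    · intro g _; abel
  have hsum : ∑ y' : H, (univ.filter fun g => f g = y').card = Fintype.card G := by
    rw [← Finset.card_eq_sum_card_fiberwise (fun x _ => mem_univ (f x))]
    rfl
  calc (univ.filter fun g => f g = y).card * Fintype.card H
      = ∑ _y' : H, (univ.filter fun g => f g = y).card := by
        rw [Finset.sum_const, Finset.card_univ, smul_eq_mul, mul_comm]
    _ = ∑ y' : H, (univ.filter fun g => f g = y').card :=
        Finset.sum_congr rfl (fun y' _ => hconst y y')
    _ = Fintype.card G := hsum

lemma zmod2_ne_iff : ∀ {a b : ZMod 2}, a ≠ b ↔ a + b = 1 := by decide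

lemma zmod2_ne_zero_iff : ∀ {a : ZMod 2}, a ≠ 0 ↔ a = 1 := by decide

lemma zmod2_add_eq_zero_iff : ∀ {a b : ZMod 2}, a + b = 0 ↔ a = b := by decide

end Helpers

section Inner

variable {k : ℕ}

/-- Inner product over `ZMod 2`. -/
def ip (v w : Fin k → ZMod 2) : ZMod 2 := ∑ i, v i * w i

lemma ip_add_right (v w w' : Fin k → ZMod 2) : ip v (w + w') = ip v w + ip v w' := by
  simp [ip, mul_add, Finset.sum_add_distrib]

lemma ip_add_left (v v' w : Fin k → ZMod 2) : ip (v + v') w = ip v w + ip v' w := by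
  simp [ip, add_mul, Finset.sum_add_distrib]

lemma ip_zero_right (v : Fin k → ZMod 2) : ip v 0 = 0 := by simp [ip]

/-- single-coordinate vector -/
def esingle (m : Fin k) (c : ZMod 2) : Fin k → ZMod 2 := Pi.single m c

lemma ip_single_right (v : Fin k → ZMod 2) (m : Fin k) (c : ZMod 2) :
    ip v (esingle m c) = v m * c := by
  simp [ip, esingle, Pi.single_apply, mul_ite, Finset.sum_ite_eq']

/-- The inner product with a fixed left argument, as an additive hom. -/
def ipHom (v : Fin k → ZMod 2) : (Fin k → ZMod 2) →+ ZMod 2 where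
  toFun w := ip v w
  map_zero' := ip_zero_right v
  map_add' w w' := ip_add_right v w w'

lemma pairSurj {a b : Fin k → ZMod 2} (ha : a ≠ 0) (hb : b ≠ 0) (hab : a ≠ b)
    (s t : ZMod 2) : ∃ w, ip a w = s ∧ ip b w = t := by
  have hm : ∃ m, a m ≠ b m := by
    by_contra h; push_neg at h; exact hab (funext h)
  obtain ⟨m, hm⟩ := hm
  rcases (by decide : ∀ x y : ZMod 2, x ≠ y → (x = 1 ∧ y = 0) ∨ (x = 0 ∧ y = 1))
      _ _ hm with ⟨ha1, hb0⟩ | ⟨ha0, hb1⟩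
  · have : ∃ m3, b m3 ≠ 0 := by
      by_contra h; push_neg at h; exact hb (funext h)
    obtain ⟨m3, hm3⟩ := this
    have hbm3 : b m3 = 1 := zmod2_ne_zero_iff.mp hm3
    refine ⟨esingle m (s + t * a m3) + esingle m3 t, ?_, ?_⟩
    · rw [ip_add_right, ip_single_right, ip_single_right, ha1]
      exact (by decide : ∀ x s t : ZMod 2, 1 * (s + t * x) + x * t = s) _ _ _
    · rw [ip_add_right, ip_single_right, ip_single_right, hb0, hbm3]
      exact (by decide : ∀ u t : ZMod 2, 0 * u + 1 * t = t) _ _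
  · have : ∃ m2, a m2 ≠ 0 := by
      by_contra h; push_neg at h; exact ha (funext h)
    obtain ⟨m2, hm2⟩ := this
    have ham2 : a m2 = 1 := zmod2_ne_zero_iff.mp hm2
    refine ⟨esingle m (t + s * b m2) + esingle m2 s, ?_, ?_⟩
    · rw [ip_add_right, ip_single_right, ip_single_right, ha0, ham2]
      exact (by decide : ∀ u s : ZMod 2, 0 * u + 1 * s = s) _ _
    · rw [ip_add_right, ip_single_right, ip_single_right, hb1]
      exact (by decide : ∀ x s t : ZMod 2, 1 * (t + s * x) + x * s = t) _ _ _

end Inner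

section BinSurj

variable {p n : ℕ} {M : Fin n → Fin (p + 1) → ZMod 2}

lemma binSurj (hM0 : ∀ i, M i 0 = 1) (hMinj : Function.Injective M)
    (S : Finset (Fin n)) (hS : S.card ≤ 3) :
    Function.Surjective (fun (z : Fin (p + 1) → ZMod 2) (i : ↥S) => ip (M i.val) z) := by
  intro y
  have hcases : S.card = 0 ∨ S.card = 1 ∨ S.card = 2 ∨ S.card = 3 := by omega
  have hne : ∀ (i j : Fin n), i ≠ j → ∃ m, M i m ≠ M j m := by
    intro i j hij
    by_contra h; push_neg at h; exact hij (hMinj (funext h))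
  rcases hcases with h0 | h1 | h2 | h3
  · refine ⟨0, funext fun i => absurd i.2 ?_⟩
    have h := Finset.card_eq_zero.mp h0
    simp [h]
  · obtain ⟨i, rfl⟩ := Finset.card_eq_one.mp h1
    refine ⟨esingle 0 (y ⟨i, mem_singleton_self i⟩), funext fun j => ?_⟩
    obtain ⟨j, hj⟩ := j
    obtain rfl : j = i := mem_singleton.mp hj
    show ip (M j) _ = _
    rw [ip_single_right, hM0, one_mul]
  · obtain ⟨i, j, hij, rfl⟩ := Finset.card_eq_two.mp h2
    set Yi := y ⟨i, by simp⟩ with hYi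
    set Yj := y ⟨j, by simp⟩ with hYj
    obtain ⟨m, hm⟩ := hne i j hij
    refine ⟨esingle m (Yi + Yj) + esingle 0 (Yi + (Yi + Yj) * M i m),
      funext fun l => ?_⟩
    obtain ⟨l, hl⟩ := l
    show ip (M l) _ = _
    rw [ip_add_right, ip_single_right, ip_single_right, hM0]
    rcases Finset.mem_insert.mp hl with rfl | hl'
    · exact (by decide : ∀ (x yi yj : ZMod 2),
        x * (yi + yj) + 1 * (yi + (yi + yj) * x) = yi) _ _ _
    · obtain rfl : l = j := mem_singleton.mp hl'
      exact (by decide : ∀ (x x' yi yj : ZMod 2), x ≠ x' →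
        x' * (yi + yj) + 1 * (yi + (yi + yj) * x) = yj) _ _ _ _ hm
  · obtain ⟨i, j, k, hij, hik, hjk, rfl⟩ := Finset.card_eq_three.mp h3
    set Yi := y ⟨i, by simp⟩ with hYi
    set Yj := y ⟨j, by simp⟩ with hYj
    set Yk := y ⟨k, by simp⟩ with hYk
    have ha : M i + M j ≠ 0 := by
      intro h
      refine hij (hMinj (funext fun l => ?_))
      have := congrFun h l
      exact zmod2_add_eq_zero_iff.mp this
    have hb : M i + M k ≠ 0 := by
      intro h
      refine hik (hMinj (funext fun l => ?_))
      exact zmod2_add_eq_zero_iff.mp (congrFun h l)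
    have hab : M i + M j ≠ M i + M k := by
      intro h
      refine hjk (hMinj (funext fun l => ?_))
      have := congrFun h l
      exact add_left_cancel this
    obtain ⟨w, hw1, hw2⟩ := pairSurj ha hb hab (Yi + Yj) (Yi + Yk)
    rw [ip_add_left] at hw1 hw2
    refine ⟨w + esingle 0 (Yi + ip (M i) w), funext fun l => ?_⟩
    obtain ⟨l, hl⟩ := l
    show ip (M l) _ = _
    rw [ip_add_right, ip_single_right, hM0]
    have hj' : ip (M j) w = Yi + Yj + ip (M i) w :=
      (by decide : ∀ (u v s : ZMod 2), u + v = s → v = s + u) _ _ _ hw1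
    have hk' : ip (M k) w = Yi + Yk + ip (M i) w :=
      (by decide : ∀ (u v s : ZMod 2), u + v = s → v = s + u) _ _ _ hw2
    rcases Finset.mem_insert.mp hl with rfl | hl'
    · exact (by decide : ∀ (u yi : ZMod 2), u + 1 * (yi + u) = yi) _ _
    rcases Finset.mem_insert.mp hl' with rfl | hl''
    · rw [hj']
      exact (by decide : ∀ (u yi yj : ZMod 2), yi + yj + u + 1 * (yi + u) = yj) _ _ _
    · obtain rfl : l = k := mem_singleton.mp hl''
      rw [hk']
      exact (by decide : ∀ (u yi yk : ZMod 2), yi + yk + u + 1 * (yi + u) = yk) _ _ _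

end BinSurj

section CountHelpers

lemma card_filter_sum {κ₁ κ₂ : Type*} [Fintype κ₁] [Fintype κ₂]
    (P : κ₁ ⊕ κ₂ → Prop) [DecidablePred P] :
    (univ.filter P).card
      = (univ.filter fun a => P (Sum.inl a)).card
        + (univ.filter fun b => P (Sum.inr b)).card := by
  rw [← Finset.card_toLeft_add_card_toRight]
  have h1 : (univ.filter P).toLeft = univ.filter fun a => P (Sum.inl a) := by
    ext a; simp [Finset.mem_toLeft]
  have h2 : (univ.filter P).toRight = univ.filter fun b => P (Sum.inr b) := by
    ext b; simp [Finset.mem_toRight]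
  rw [h1, h2]

lemma card_filter_prod {α β : Type*} [Fintype α] [Fintype β] [DecidableEq α]
    (P : α × β → Prop) [DecidablePred P] :
    (univ.filter P).card = ∑ a : α, (univ.filter fun b => P (a, b)).card := by
  rw [Finset.card_eq_sum_card_fiberwise (f := fun x : α × β => x.1)
    (t := univ) (fun x _ => mem_univ _)]
  refine Finset.sum_congr rfl fun a _ => ?_
  refine Finset.card_bij' (fun x _ => x.2) (fun b _ => (a, b)) ?_ ?_ ?_ ?_
  · rintro ⟨x1, x2⟩ hx
    simp only [mem_filter, mem_univ, true_and] at hx ⊢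
    obtain ⟨h1, h2⟩ := hx
    have h2' : x1 = a := h2
    subst h2'
    exact h1
  · intro b hb
    simp only [mem_filter, mem_univ, true_and] at hb ⊢
    exact ⟨hb, trivial⟩
  · rintro ⟨x1, x2⟩ hx
    simp only [mem_filter, mem_univ, true_and] at hx
    obtain ⟨h1, h2⟩ := hx
    have h2' : x1 = a := h2
    subst h2'
    rfl
  · intro b _; rfl

lemma filter_equiv_card {α β : Type*} [Fintype α] [Fintype β] (e : α ≃ β)
    (P : β → Prop) [DecidablePred P] :
    (univ.filter fun a => P (e a)).card = (univ.filter P).card := by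
  refine Finset.card_bij' (fun a _ => e a) (fun b _ => e.symm b) ?_ ?_ ?_ ?_ <;>
    simp [Finset.mem_filter]

end CountHelpers

section Tern

/-- ternary pairing -/
def tip {m : ℕ} (v a : Fin m → ZMod 3) : ZMod 3 := ∑ i, v i * a i

lemma tip_add_right {m : ℕ} (v a b : Fin m → ZMod 3) :
    tip v (a + b) = tip v a + tip v b := by
  simp [tip, mul_add, Finset.sum_add_distrib]

lemma tip_sub_right {m : ℕ} (v a b : Fin m → ZMod 3) :
    tip v (a - b) = tip v a - tip v b := by
  simp [tip, mul_sub, Finset.sum_sub_distrib]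

end Tern

section Build

variable {t m n p : ℕ}

/-- the ternary-class-dependent binary offset -/
def gfun (cls : (Fin m → ZMod 3) → Fin 16) (a : Fin m → ZMod 3) (i : Fin n) : ZMod 2 :=
  if cls a = 0 then 0 else if (i : ℕ) = 0 ∨ (i : ℕ) = (cls a : Fin 16).val then 1 else 0

/-- the assembled array on the abstract row type -/
def arrB (L : Fin t → Fin m → ZMod 3) (cls : (Fin m → ZMod 3) → Fin 16)
    (M : Fin n → Fin (p + 1) → ZMod 2)
    (row : (Fin m → ZMod 3) × (Fin (p + 1) → ZMod 2)) : Fin t ⊕ Fin n → ℕ :=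
  Sum.elim (fun j => (tip (L j) row.1).val)
    (fun i => (ip (M i) row.2 + gfun cls row.1 i).val)

lemma gfun_diff (hn16 : 16 ≤ n) (cls : (Fin m → ZMod 3) → Fin 16)
    {a b : Fin m → ZMod 3} (hab : cls a ≠ cls b) :
    ∃ d1 d2 : Fin n, d1 ≠ d2 ∧
      ∀ i, gfun cls a i + gfun cls b i = if i = d1 ∨ i = d2 then 1 else 0 := by
  have hvlt : ∀ c : Fin 16, (c : ℕ) < n := fun c => lt_of_lt_of_le c.isLt hn16
  have hvne : ∀ c : Fin 16, c ≠ 0 → (c : ℕ) ≠ 0 := by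
    intro c hc h; exact hc (Fin.ext h)
  by_cases ha0 : cls a = 0
  · have hb0 : cls b ≠ 0 := fun h => hab (h ▸ ha0)
    refine ⟨⟨0, by omega⟩, ⟨(cls b : Fin 16).val, hvlt _⟩, ?_, ?_⟩
    · intro h
      exact hvne _ hb0 (congrArg Fin.val h).symm
    · intro i
      simp only [gfun, if_pos ha0, if_neg hb0, zero_add]
      refine if_congr ?_ rfl rfl
      rw [Fin.ext_iff, Fin.ext_iff]
  · by_cases hb0 : cls b = 0
    · refine ⟨⟨0, by omega⟩, ⟨(cls a : Fin 16).val, hvlt _⟩, ?_, ?_⟩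
      · intro h
        exact hvne _ ha0 (congrArg Fin.val h).symm
      · intro i
        simp only [gfun, if_pos hb0, if_neg ha0, add_zero]
        refine if_congr ?_ rfl rfl
        rw [Fin.ext_iff, Fin.ext_iff]
    · refine ⟨⟨(cls a : Fin 16).val, hvlt _⟩, ⟨(cls b : Fin 16).val, hvlt _⟩, ?_, ?_⟩
      · intro h
        have h' := congrArg Fin.val h
        simp only at h'
        exact hab (Fin.ext h')
      · intro i
        simp only [gfun, if_neg ha0, if_neg hb0]
        have hane : ((cls a : Fin 16) : ℕ) ≠ 0 := hvne _ ha0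
        have hbne : ((cls b : Fin 16) : ℕ) ≠ 0 := hvne _ hb0
        have habv : ((cls a : Fin 16) : ℕ) ≠ ((cls b : Fin 16) : ℕ) := by
          intro h; exact hab (Fin.ext h)
        have h11 : (1 : ZMod 2) + 1 = 0 := by decide
        simp only [Fin.ext_iff]
        by_cases h0 : (i : ℕ) = 0 <;> by_cases hca : (i : ℕ) = (cls a : Fin 16).val <;>
          by_cases hcb : (i : ℕ) = (cls b : Fin 16).val <;>
          first
          | omega
          | simp_all

lemma build_dist (hn16 : 16 ≤ n)
    (L : Fin t → Fin m → ZMod 3) (cls : (Fin m → ZMod 3) → Fin 16)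
    (M : Fin n → Fin (p + 1) → ZMod 2)
    (hB3 : ∀ z : Fin (p + 1) → ZMod 2, z ≠ 0 →
      4 ≤ (univ.filter fun i : Fin n => ip (M i) z = 1).card)
    (hwt2 : ∀ d : Fin m → ZMod 3, d ≠ 0 →
      2 ≤ (univ.filter fun j : Fin t => tip (L j) d ≠ 0).card)
    (hcls : ∀ d : Fin m → ZMod 3, d ≠ 0 → ∀ a, cls a = cls (a + d) →
      4 ≤ (univ.filter fun j : Fin t => tip (L j) d ≠ 0).card)
    (r1 r2 : (Fin m → ZMod 3) × (Fin (p + 1) → ZMod 2)) (hne : r1 ≠ r2) :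
    4 ≤ hamDist (arrB L cls M) r1 r2 := by
  obtain ⟨a, z⟩ := r1
  obtain ⟨b, z'⟩ := r2
  rw [hamDist, card_filter_sum]
  have hval3 : Function.Injective (ZMod.val : ZMod 3 → ℕ) := ZMod.val_injective 3
  have hval2 : Function.Injective (ZMod.val : ZMod 2 → ℕ) := ZMod.val_injective 2
  -- ternary part
  have hT : (univ.filter fun j : Fin t => arrB L cls M (a, z) (Sum.inl j)
        ≠ arrB L cls M (b, z') (Sum.inl j))
      = (univ.filter fun j : Fin t => tip (L j) (a - b) ≠ 0) := by
    apply Finset.filter_congr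
    intro j _
    show ((tip (L j) a).val ≠ (tip (L j) b).val) ↔ _
    rw [tip_sub_right, sub_ne_zero]
    exact ⟨fun h h' => h (congrArg _ h'), fun h h' => h (hval3 h')⟩
  -- binary part
  have hBf : ∀ i : Fin n, (arrB L cls M (a, z) (Sum.inr i)
        ≠ arrB L cls M (b, z') (Sum.inr i))
      ↔ ip (M i) (z + z') + (gfun cls a i + gfun cls b i) ≠ 0 := by
    intro i
    show ((ip (M i) z + gfun cls a i).val ≠ (ip (M i) z' + gfun cls b i).val) ↔ _
    constructor
    · intro h h'
      apply h
      apply congrArg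
      rw [ip_add_right] at h'
      exact (by decide : ∀ u v x y : ZMod 2, u + v + (x + y) = 0 → u + x = v + y)
        _ _ _ _ h'
    · intro h h'
      apply h
      rw [ip_add_right]
      exact (by decide : ∀ u v x y : ZMod 2, u + x = v + y → u + v + (x + y) = 0)
        _ _ _ _ (hval2 h')
  have hB : (univ.filter fun i : Fin n => arrB L cls M (a, z) (Sum.inr i)
        ≠ arrB L cls M (b, z') (Sum.inr i))
      = (univ.filter fun i : Fin n =>
          ip (M i) (z + z') + (gfun cls a i + gfun cls b i) ≠ 0) := by
    apply Finset.filter_congr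
    intro i _
    exact hBf i
  rw [hT, hB]
  by_cases hab : a = b
  · subst hab
    have hzz : z ≠ z' := by
      intro h; exact hne (by rw [h])
    have hzb : z + z' ≠ 0 := by
      intro h
      apply hzz
      funext l
      exact zmod2_add_eq_zero_iff.mp (congrFun h l)
    have heq : (univ.filter fun i : Fin n =>
          ip (M i) (z + z') + (gfun cls a i + gfun cls a i) ≠ 0)
        = (univ.filter fun i : Fin n => ip (M i) (z + z') = 1) := by
      apply Finset.filter_congr
      intro i _
      rw [(by decide : ∀ x : ZMod 2, x + x = 0) (gfun cls a i), add_zero]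
      exact zmod2_ne_zero_iff
    rw [heq]
    have := hB3 (z + z') hzb
    omega
  · have hd : a - b ≠ 0 := sub_ne_zero.mpr hab
    by_cases hc : cls a = cls b
    · have h4 : 4 ≤ (univ.filter fun j : Fin t => tip (L j) (a - b) ≠ 0).card := by
        apply hcls (a - b) hd b
        rw [show b + (a - b) = a by abel]
        exact hc.symm
      omega
    · have h2 : 2 ≤ (univ.filter fun j : Fin t => tip (L j) (a - b) ≠ 0).card :=
        hwt2 _ hd
      obtain ⟨d1, d2, hd12, hδ⟩ := gfun_diff hn16 cls hc
      have h2b : 2 ≤ (univ.filter fun i : Fin n =>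
          ip (M i) (z + z') + (gfun cls a i + gfun cls b i) ≠ 0).card := by
        by_cases hzb : z + z' = 0
        · have heq : (univ.filter fun i : Fin n =>
              ip (M i) (z + z') + (gfun cls a i + gfun cls b i) ≠ 0)
              = {d1, d2} := by
            ext i
            simp only [mem_filter, mem_univ, true_and, mem_insert, mem_singleton]
            rw [hzb, ip_zero_right, zero_add, hδ i]
            by_cases h : i = d1 ∨ i = d2
            · rw [if_pos h]
              simpa using h
            · rw [if_neg h]
              simpa using h
          rw [heq, Finset.card_insert_of_notMem (by simpa using hd12),
            Finset.card_singleton]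
        · have h4 : 4 ≤ (univ.filter fun i : Fin n => ip (M i) (z + z') = 1).card :=
            hB3 _ hzb
          have hsub : (univ.filter fun i : Fin n => ip (M i) (z + z') = 1)
              ⊆ (univ.filter fun i : Fin n =>
                ip (M i) (z + z') + (gfun cls a i + gfun cls b i) ≠ 0) ∪ {d1, d2} := by
            intro i hi
            simp only [mem_filter, mem_univ, true_and] at hi
            by_cases hid : i = d1 ∨ i = d2
            · apply Finset.mem_union_right
              simpa using hid
            · apply Finset.mem_union_left
              simp only [mem_filter, mem_univ, true_and]
              rw [hi, hδ i, if_neg hid]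
              decide
          have := Finset.card_le_card hsub
          have hu := Finset.card_union_le (univ.filter fun i : Fin n =>
                ip (M i) (z + z') + (gfun cls a i + gfun cls b i) ≠ 0) ({d1, d2} : Finset (Fin n))
          have : ({d1, d2} : Finset (Fin n)).card ≤ 2 := Finset.card_insert_le _ _ |>.trans (by simp)
          omega
      omega

lemma tip_zero_right {m : ℕ} (v : Fin m → ZMod 3) : tip v 0 = 0 := by simp [tip]

lemma val_eq_iff3 {v : ZMod 3} {xn : ℕ} (h : xn < 3) : v.val = xn ↔ v = (xn : ZMod 3) := by
  constructor
  · intro hv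
    apply ZMod.val_injective
    rw [ZMod.val_cast_of_lt h, hv]
  · intro hv
    rw [hv, ZMod.val_cast_of_lt h]

lemma val_eq_iff2 {v : ZMod 2} {xn : ℕ} (h : xn < 2) : v.val = xn ↔ v = (xn : ZMod 2) := by
  constructor
  · intro hv
    apply ZMod.val_injective
    rw [ZMod.val_cast_of_lt h, hv]
  · intro hv
    rw [hv, ZMod.val_cast_of_lt h]

lemma build_strength
    (L : Fin t → Fin m → ZMod 3) (cls : (Fin m → ZMod 3) → Fin 16)
    (M : Fin n → Fin (p + 1) → ZMod 2)
    (hTsurj : ∀ S : Finset (Fin t), S.card ≤ 3 →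
      Function.Surjective (fun (a : Fin m → ZMod 3) (j : ↥S) => tip (L j.val) a))
    (hBsurj : ∀ S : Finset (Fin n), S.card ≤ 3 →
      Function.Surjective (fun (z : Fin (p + 1) → ZMod 2) (i : ↥S) => ip (M i.val) z))
    (S : Finset (Fin t ⊕ Fin n)) (hS : S.card ≤ 3) (x : Fin t ⊕ Fin n → ℕ)
    (hx : ∀ j ∈ S, x j < Sum.elim (fun _ => 3) (fun _ => 2) j) :
    (univ.filter fun row : (Fin m → ZMod 3) × (Fin (p + 1) → ZMod 2) =>
        ∀ c ∈ S, arrB L cls M row c = x c).card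
      * ∏ c ∈ S, Sum.elim (fun _ => (3:ℕ)) (fun _ => 2) c
      = Fintype.card ((Fin m → ZMod 3) × (Fin (p + 1) → ZMod 2)) := by
  classical
  set S₁ := S.toLeft with hS₁
  set S₂ := S.toRight with hS₂
  have hcards : S₁.card + S₂.card = S.card := Finset.card_toLeft_add_card_toRight
  -- the two homs
  let F₁ : (Fin m → ZMod 3) →+ (↥S₁ → ZMod 3) :=
    { toFun := fun a j => tip (L j.val) a
      map_zero' := funext fun j => tip_zero_right _
      map_add' := fun a b => funext fun j => tip_add_right _ _ _ }
  let F₂ : (Fin (p + 1) → ZMod 2) →+ (↥S₂ → ZMod 2) :=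
    { toFun := fun z i => ip (M i.val) z
      map_zero' := funext fun i => ip_zero_right _
      map_add' := fun z z' => funext fun i => ip_add_right _ _ _ }
  let yT : ↥S₁ → ZMod 3 := fun j => ((x (Sum.inl j.val) : ℕ) : ZMod 3)
  let yB : (Fin m → ZMod 3) → ↥S₂ → ZMod 2 :=
    fun a i => ((x (Sum.inr i.val) : ℕ) : ZMod 2) + gfun cls a i.val
  -- condition equivalence
  have hcond : ∀ (a : Fin m → ZMod 3) (z : Fin (p + 1) → ZMod 2),
      (∀ c ∈ S, arrB L cls M (a, z) c = x c) ↔ (F₁ a = yT ∧ F₂ z = yB a) := by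
    intro a z
    constructor
    · intro h
      constructor
      · funext j
        have hj : Sum.inl j.val ∈ S := Finset.mem_toLeft.mp j.2
        have := h _ hj
        exact (val_eq_iff3 (hx _ hj)).mp this
      · funext i
        have hi : Sum.inr i.val ∈ S := Finset.mem_toRight.mp i.2
        have hlt : x (Sum.inr i.val) < 2 := hx _ hi
        have := (val_eq_iff2 hlt).mp (h _ hi)
        show ip (M i.val) z = _
        exact (by decide : ∀ u g c : ZMod 2, u + g = c → u = c + g) _ _ _ this
    · rintro ⟨h1, h2⟩ c hc
      match c with
      | Sum.inl j =>
          have hj : j ∈ S₁ := Finset.mem_toLeft.mpr hc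
          have := congrFun h1 ⟨j, hj⟩
          exact (val_eq_iff3 (hx _ hc)).mpr this
      | Sum.inr i =>
          have hi : i ∈ S₂ := Finset.mem_toRight.mpr hc
          have := congrFun h2 ⟨i, hi⟩
          show (ip (M i) z + gfun cls a i).val = x (Sum.inr i)
          apply (val_eq_iff2 (hx _ hc)).mpr
          have this' : ip (M i) z = ((x (Sum.inr i) : ℕ) : ZMod 2) + gfun cls a i := this
          rw [this']
          exact (by decide : ∀ c g : ZMod 2, c + g + g = c) _ _
  -- counting
  rw [card_filter_prod]
  have hinner : ∀ a : Fin m → ZMod 3,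
      (univ.filter fun z => ∀ c ∈ S, arrB L cls M (a, z) c = x c).card * 2 ^ S₂.card
        = (if F₁ a = yT then 1 else 0) * 2 ^ (p + 1) := by
    intro a
    by_cases hFa : F₁ a = yT
    · rw [if_pos hFa, one_mul]
      have heq : (univ.filter fun z => ∀ c ∈ S, arrB L cls M (a, z) c = x c)
          = (univ.filter fun z => F₂ z = yB a) := by
        apply Finset.filter_congr
        intro z _
        rw [hcond a z]
        simp [hFa]
      rw [heq]
      have := card_fiber_mul F₂ (hBsurj S₂ (by omega)) (yB a)
      rwa [Fintype.card_fun, Fintype.card_coe, ZMod.card,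
        Fintype.card_fun, Fintype.card_fin, ZMod.card] at this
    · rw [if_neg hFa, zero_mul]
      have heq : (univ.filter fun z => ∀ c ∈ S, arrB L cls M (a, z) c = x c) = ∅ := by
        apply Finset.filter_false_of_mem
        intro z _
        rw [hcond a z]
        tauto
      rw [heq, Finset.card_empty, zero_mul]
  -- outer count
  have houter : (univ.filter fun a : Fin m → ZMod 3 => F₁ a = yT).card * 3 ^ S₁.card
      = 3 ^ m := by
    have := card_fiber_mul F₁ (hTsurj S₁ (by omega)) yT
    rwa [Fintype.card_fun, Fintype.card_coe, ZMod.card,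
      Fintype.card_fun, Fintype.card_fin, ZMod.card] at this
  -- product of levels
  have hprod : (∏ c ∈ S, Sum.elim (fun _ => (3:ℕ)) (fun _ => 2) c)
      = 3 ^ S₁.card * 2 ^ S₂.card := by
    conv_lhs => rw [← Finset.toLeft_disjSum_toRight (u := S)]
    rw [Finset.prod_disjSum]
    simp [Finset.prod_const, hS₁, hS₂]
  rw [hprod]
  have hsum : (∑ a : Fin m → ZMod 3,
        (univ.filter fun z => ∀ c ∈ S, arrB L cls M (a, z) c = x c).card) * 2 ^ S₂.card
      = (univ.filter fun a : Fin m → ZMod 3 => F₁ a = yT).card * 2 ^ (p + 1) := by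
    rw [Finset.sum_mul]
    have : ∀ a ∈ (univ : Finset (Fin m → ZMod 3)),
        (univ.filter fun z => ∀ c ∈ S, arrB L cls M (a, z) c = x c).card * 2 ^ S₂.card
        = (if F₁ a = yT then 1 else 0) * 2 ^ (p + 1) := fun a _ => hinner a
    rw [Finset.sum_congr rfl this, ← Finset.sum_mul]
    congr 1
    rw [Finset.sum_boole]
    simp
  have hfinal : (∑ a : Fin m → ZMod 3,
        (univ.filter fun z => ∀ c ∈ S, arrB L cls M (a, z) c = x c).card)
      * (3 ^ S₁.card * 2 ^ S₂.card)
      = ((∑ a : Fin m → ZMod 3,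
        (univ.filter fun z => ∀ c ∈ S, arrB L cls M (a, z) c = x c).card)
        * 2 ^ S₂.card) * 3 ^ S₁.card := by ring
  rw [hfinal, hsum, Fintype.card_prod, Fintype.card_fun, Fintype.card_fun,
    Fintype.card_fin, Fintype.card_fin, ZMod.card, ZMod.card]
  calc (univ.filter fun a : Fin m → ZMod 3 => F₁ a = yT).card * 2 ^ (p + 1) * 3 ^ S₁.card
      = ((univ.filter fun a : Fin m → ZMod 3 => F₁ a = yT).card * 3 ^ S₁.card)
        * 2 ^ (p + 1) := by ring
    _ = 3 ^ m * 2 ^ (p + 1) := by rw [houter]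

theorem buildIrMOA (hn16 : 16 ≤ n)
    (L : Fin t → Fin m → ZMod 3) (cls : (Fin m → ZMod 3) → Fin 16)
    (M : Fin n → Fin (p + 1) → ZMod 2)
    (hM0 : ∀ i, M i 0 = 1) (hMinj : Function.Injective M)
    (hB3 : ∀ z : Fin (p + 1) → ZMod 2, z ≠ 0 →
      4 ≤ (univ.filter fun i : Fin n => ip (M i) z = 1).card)
    (hTsurj : ∀ S : Finset (Fin t), S.card ≤ 3 →
      Function.Surjective (fun (a : Fin m → ZMod 3) (j : ↥S) => tip (L j.val) a))
    (hwt2 : ∀ d : Fin m → ZMod 3, d ≠ 0 →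
      2 ≤ (univ.filter fun j : Fin t => tip (L j) d ≠ 0).card)
    (hcls : ∀ d : Fin m → ZMod 3, d ≠ 0 → ∀ a, cls a = cls (a + d) →
      4 ≤ (univ.filter fun j : Fin t => tip (L j) d ≠ 0).card) :
    ∃ (r : ℕ) (C : Fin r → (Fin t ⊕ Fin n) → ℕ),
      0 < r ∧ IsIrMOA C (Sum.elim (fun _ => 3) fun _ => 2) 3 := by
  classical
  obtain ⟨e⟩ : Nonempty (Fin (Fintype.card ((Fin m → ZMod 3) × (Fin (p + 1) → ZMod 2)))
      ≃ ((Fin m → ZMod 3) × (Fin (p + 1) → ZMod 2))) :=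
    ⟨(Fintype.equivFin _).symm⟩
  refine ⟨Fintype.card ((Fin m → ZMod 3) × (Fin (p + 1) → ZMod 2)),
    fun ir => arrB L cls M (e ir), Fintype.card_pos, ?_, ?_⟩
  · constructor
    · intro i c
      match c with
      | Sum.inl j =>
          show (tip (L j) (e i).1).val < 3
          exact ZMod.val_lt _
      | Sum.inr i' =>
          show (ip (M i') (e i).2 + gfun cls (e i).1 i').val < 2
          exact ZMod.val_lt _
    · intro S hS x hx
      have hmain := build_strength L cls M hTsurj
        (binSurj hM0 hMinj) S hS x hx
      have hc := filter_equiv_card e (fun row => ∀ j ∈ S, arrB L cls M row j = x j)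
      rw [Fintype.card_fin]
      have goal_eq : (univ.filter fun i : Fin (Fintype.card ((Fin m → ZMod 3) × (Fin (p + 1) → ZMod 2))) =>
            ∀ j ∈ S, arrB L cls M (e i) j = x j).card
          * ∏ j ∈ S, Sum.elim (fun _ => (3:ℕ)) (fun _ => 2) j
          = Fintype.card ((Fin m → ZMod 3) × (Fin (p + 1) → ZMod 2)) := by
        rw [hc]
        exact hmain
      exact goal_eq
  · intro i i' hii
    exact build_dist hn16 L cls M hB3 hwt2 hcls (e i) (e i')
      (fun h => hii (e.injective h))

end Build

section Binary

/-- bit-vector encoding of a natural number -/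
def bv (Q : ℕ) (y : ℕ) : Fin Q → ZMod 2 := fun j => if Nat.testBit y j.val then 1 else 0

lemma bv_inj {Q : ℕ} {y1 y2 : ℕ} (h1 : y1 < 2 ^ Q) (h2 : y2 < 2 ^ Q)
    (h : bv Q y1 = bv Q y2) : y1 = y2 := by
  apply Nat.eq_of_testBit_eq
  intro j
  by_cases hj : j < Q
  · have := congrFun h ⟨j, hj⟩
    simp only [bv] at this
    by_cases hb1 : Nat.testBit y1 j <;> by_cases hb2 : Nat.testBit y2 j <;>
      simp_all
  · have hQ : 2 ^ Q ≤ 2 ^ j := Nat.pow_le_pow_right (by norm_num) (by omega)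
    rw [Nat.testBit_eq_false_of_lt (by omega), Nat.testBit_eq_false_of_lt (by omega)]

/-- the binary column functionals -/
def Mmat (Q e n : ℕ) : Fin n → Fin (Q + 2) → ZMod 2 :=
  fun i => Fin.cons 1 (Fin.cons (if (i : ℕ) < e then 0 else 1)
    (bv Q (if (i : ℕ) < e then (i : ℕ) else (i : ℕ) - e)))

lemma ip_cons {k : ℕ} (x : ZMod 2) (v : Fin k → ZMod 2) (z : Fin (k + 1) → ZMod 2) :
    ip (Fin.cons x v) z = x * z 0 + ip v (fun j => z j.succ) := by
  rw [ip, Fin.sum_univ_succ]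
  simp [ip]

lemma ip_zero_left {k : ℕ} (w : Fin k → ZMod 2) : ip 0 w = 0 := by simp [ip]

lemma ip_single_left {k : ℕ} (m : Fin k) (c : ZMod 2) (w : Fin k → ZMod 2) :
    ip (esingle m c) w = c * w m := by
  simp [ip, esingle, Pi.single_apply, ite_mul, Finset.sum_ite_eq]

lemma Mmat_zero {Q e n : ℕ} (i : Fin n) : Mmat Q e n i 0 = 1 := rfl

lemma card_fin_lt (n e : ℕ) (h : e ≤ n) :
    (univ.filter fun i : Fin n => (i : ℕ) < e).card = e := by
  have key : (univ.filter fun i : Fin n => (i : ℕ) < e).card = (Finset.range e).card := by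
    refine Finset.card_bij' (fun i _ => (i : ℕ))
      (fun y hy => (⟨y, lt_of_lt_of_le (mem_range.mp hy) h⟩ : Fin n)) ?_ ?_ ?_ ?_
    · intro i hi
      simp only [mem_filter, mem_univ, true_and] at hi
      exact mem_range.mpr hi
    · intro y hy
      simp only [mem_filter, mem_univ, true_and]
      exact mem_range.mp hy
    · intro i _; rfl
    · intro y _; rfl
  rw [key, Finset.card_range]

lemma Mmat_inj {Q e tt n : ℕ} (he2 : e ≤ 2 ^ Q) (heq : n + tt = e + 2 ^ Q) :
    Function.Injective (Mmat Q e n) := by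
  intro i i' h
  have h1 := congrFun h (0 : Fin (Q + 1)).succ
  rw [show ((0 : Fin (Q+1)).succ : Fin (Q+2)) = (0 : Fin (Q+1)).succ from rfl] at h1
  simp only [Mmat, Fin.cons_succ, Fin.cons_zero] at h1
  have hv : bv Q (if (i : ℕ) < e then (i : ℕ) else (i : ℕ) - e)
      = bv Q (if (i' : ℕ) < e then (i' : ℕ) else (i' : ℕ) - e) := by
    funext j
    have h2 := congrFun h j.succ.succ
    simpa only [Mmat, Fin.cons_succ] using h2
  by_cases hi : (i : ℕ) < e <;> by_cases hi' : (i' : ℕ) < e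
  · rw [if_pos hi] at hv; rw [if_pos hi'] at hv
    exact Fin.ext (bv_inj (by omega) (by omega) hv)
  · rw [if_pos hi, if_neg hi'] at h1
    exact absurd h1 (by decide)
  · rw [if_neg hi, if_pos hi'] at h1
    exact absurd h1 (by decide)
  · rw [if_neg hi] at hv; rw [if_neg hi'] at hv
    have hlt : (i : ℕ) - e < 2 ^ Q := by
      have := i.isLt; omega
    have hlt' : (i' : ℕ) - e < 2 ^ Q := by
      have := i'.isLt; omega
    have := bv_inj hlt hlt' hv
    apply Fin.ext
    omega

/-- inner product with fixed right argument as hom in the left argument -/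
def ipLHom {k : ℕ} (w : Fin k → ZMod 2) : (Fin k → ZMod 2) →+ ZMod 2 where
  toFun v := ip v w
  map_zero' := ip_zero_left w
  map_add' v v' := ip_add_left v v' w

lemma zmod2_cases (a : ZMod 2) : a = 0 ∨ a = 1 := by
  revert a; decide

lemma Mmat_ip {Q e n : ℕ} (i : Fin n) (z : Fin (Q + 2) → ZMod 2) :
    ip (Mmat Q e n i) z
      = z 0 + ((if (i : ℕ) < e then 0 else 1) * z ((0 : Fin (Q + 1)).succ)
        + ip (bv Q (if (i : ℕ) < e then (i : ℕ) else (i : ℕ) - e))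
            (fun j => z j.succ.succ)) := by
  show ip (Fin.cons 1 (Fin.cons _ _)) z = _
  rw [ip_cons, ip_cons, one_mul]

lemma Mmat_B3 {Q e tt n : ℕ} (he4 : 4 ≤ e) (htt3 : tt ≤ 3)
    (hhalf : (4 + tt) * 2 ≤ 2 ^ Q) (heq : n + tt = e + 2 ^ Q) (he2 : e ≤ 2 ^ Q) :
    ∀ z : Fin (Q + 2) → ZMod 2, z ≠ 0 →
      4 ≤ (univ.filter fun i : Fin n => ip (Mmat Q e n i) z = 1).card := by
  intro z hz
  have hen : e ≤ n := by omega
  have hQ8 : 8 ≤ 2 ^ Q := by omega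
  by_cases hw : (fun j : Fin Q => z j.succ.succ) = 0
  · by_cases hw0 : z ((0 : Fin (Q + 1)).succ) = 0
    · -- only z 0 can be nonzero, so z 0 = 1 and all columns differ
      have hz0 : z 0 = 1 := by
        rcases zmod2_cases (z 0) with h0 | h1
        · exfalso
          apply hz
          funext i
          refine Fin.cases ?_ (fun j => ?_) i
          · exact h0
          · refine Fin.cases ?_ (fun j' => ?_) j
            · exact hw0
            · simpa using congrFun hw j'
        · exact h1
      have hfilt : (univ.filter fun i : Fin n => ip (Mmat Q e n i) z = 1) = univ := by
        apply Finset.filter_true_of_mem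
        intro i _
        rw [Mmat_ip, hw, ip_zero_right, hw0, hz0]
        exact (by decide : ∀ x : ZMod 2, 1 + (x * 0 + 0) = 1) _
      rw [hfilt, Finset.card_univ, Fintype.card_fin]
      omega
    · have hw1 : z ((0 : Fin (Q + 1)).succ) = 1 := zmod2_ne_zero_iff.mp hw0
      have hvals : ∀ i : Fin n, ip (Mmat Q e n i) z
          = z 0 + (if (i : ℕ) < e then 0 else 1) := by
        intro i
        rw [Mmat_ip, hw, ip_zero_right, hw1, add_zero, mul_one]
      have hcards := Finset.card_filter_add_card_filter_not
        (s := (univ : Finset (Fin n))) (p := fun i => (i : ℕ) < e)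
      rw [card_fin_lt n e hen, Finset.card_univ, Fintype.card_fin] at hcards
      rcases zmod2_cases (z 0) with h0 | h1
      · have hfilt : (univ.filter fun i : Fin n => ip (Mmat Q e n i) z = 1)
            = (univ.filter fun i : Fin n => ¬ ((i : ℕ) < e)) := by
          apply Finset.filter_congr
          intro i _
          rw [hvals i, h0, zero_add]
          by_cases hi : (i : ℕ) < e
          · rw [if_pos hi]; simp [hi]
          · rw [if_neg hi]; simp [hi]
        rw [hfilt]
        omega
      · have hfilt : (univ.filter fun i : Fin n => ip (Mmat Q e n i) z = 1)
            = (univ.filter fun i : Fin n => (i : ℕ) < e) := by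
          apply Finset.filter_congr
          intro i _
          rw [hvals i, h1]
          by_cases hi : (i : ℕ) < e
          · rw [if_pos hi]; simp [hi]
          · rw [if_neg hi]
            simp only [hi, iff_false]
            decide
        rw [hfilt, card_fin_lt n e hen]
        omega
  · -- the tail is nonzero: use the hyperplane count
    set w : Fin Q → ZMod 2 := fun j => z j.succ.succ with hwdef
    set c : ZMod 2 := 1 + z 0 + z ((0 : Fin (Q + 1)).succ) with hcdef
    have hwsurj : Function.Surjective (ipLHom w) := by
      have : ∃ j, w j ≠ 0 := by
        by_contra h; push_neg at h
        exact hw (funext fun j => h j)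
      obtain ⟨j, hj⟩ := this
      have hj1 : w j = 1 := zmod2_ne_zero_iff.mp hj
      intro c'
      exact ⟨esingle j c', by show ip _ _ = c'; rw [ip_single_left, hj1, mul_one]⟩
    have hHcount := card_fiber_mul (ipLHom w) hwsurj c
    rw [ZMod.card, Fintype.card_fun, Fintype.card_fin, ZMod.card] at hHcount
    have himg : (Finset.range (2 ^ Q)).image (bv Q) = (univ : Finset (Fin Q → ZMod 2)) := by
      apply Finset.eq_univ_of_card
      rw [Finset.card_image_of_injOn, Finset.card_range,
        Fintype.card_fun, Fintype.card_fin, ZMod.card]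
      intro y1 h1 y2 h2 hb
      exact bv_inj (mem_range.mp h1) (mem_range.mp h2) hb
    have hinjOn : ∀ (s : Finset ℕ), s ⊆ Finset.range (2 ^ Q) →
        Set.InjOn (bv Q) s := by
      intro s hs y1 h1 y2 h2 hb
      exact bv_inj (mem_range.mp (hs h1)) (mem_range.mp (hs h2)) hb
    have hR : ((Finset.range (2 ^ Q)).filter fun y => ip (bv Q y) w = c).card * 2 = 2 ^ Q := by
      have himg2 := Finset.filter_image (s := Finset.range (2 ^ Q)) (f := bv Q)
        (p := fun v : Fin Q → ZMod 2 => ip v w = c)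
      rw [himg] at himg2
      have : (univ.filter fun v : Fin Q → ZMod 2 => ip v w = c)
          = ((Finset.range (2 ^ Q)).filter fun y => ip (bv Q y) w = c).image (bv Q) := himg2
      have hHcount' : (univ.filter fun v : Fin Q → ZMod 2 => ip v w = c).card * 2
          = 2 ^ Q := hHcount
      rw [this, Finset.card_image_of_injOn
        (hinjOn _ (Finset.filter_subset _ _))] at hHcount'
      exact hHcount' 
    -- kept columns
    have hsub : ((Finset.range (2 ^ Q)).filter fun y => ip (bv Q y) w = c)
        ⊆ ((Finset.range (2 ^ Q - tt)).filter fun y => ip (bv Q y) w = c)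
          ∪ Finset.Ico (2 ^ Q - tt) (2 ^ Q) := by
      intro y hy
      simp only [mem_filter, mem_range] at hy
      by_cases hsmall : y < 2 ^ Q - tt
      · exact Finset.mem_union_left _ (by simp [mem_filter, hsmall, hy.2])
      · exact Finset.mem_union_right _ (by simp [Finset.mem_Ico]; omega)
    have hkept : 4 ≤ ((Finset.range (2 ^ Q - tt)).filter fun y => ip (bv Q y) w = c).card := by
      have h1 := Finset.card_le_card hsub
      have h2 := Finset.card_union_le
        ((Finset.range (2 ^ Q - tt)).filter fun y => ip (bv Q y) w = c)
        (Finset.Ico (2 ^ Q - tt) (2 ^ Q))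
      rw [Nat.card_Ico] at h2
      omega
    -- inject into the column set
    have hmap : ∀ y ∈ ((Finset.range (2 ^ Q - tt)).filter fun y => ip (bv Q y) w = c),
        ∀ h : y + e < n, ip (Mmat Q e n ⟨y + e, h⟩) z = 1 := by
      intro y hy h
      simp only [mem_filter, mem_range] at hy
      rw [Mmat_ip]
      have hnot : ¬ ((y + e : ℕ) < e) := by omega
      rw [if_neg hnot, if_neg hnot]
      have : y + e - e = y := by omega
      rw [this, hy.2, hcdef, one_mul]
      exact (by decide : ∀ u v : ZMod 2, u + (v + (1 + u + v)) = 1) _ _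
    have hn0 : 0 < n := by omega
    have hinj := Finset.card_le_card_of_injOn
      (f := fun y => (⟨(y + e) % n, Nat.mod_lt _ hn0⟩ : Fin n))
      (s := (Finset.range (2 ^ Q - tt)).filter fun y => ip (bv Q y) w = c)
      (t := univ.filter fun i : Fin n => ip (Mmat Q e n i) z = 1)
      ?_ ?_
    · omega
    · intro y hy
      have hyr : y < 2 ^ Q - tt := mem_range.mp (Finset.mem_filter.mp hy).1
      have h : y + e < n := by omega
      have hfe : (⟨(y + e) % n, Nat.mod_lt _ hn0⟩ : Fin n) = ⟨y + e, h⟩ :=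
        Fin.ext (Nat.mod_eq_of_lt h)
      show (⟨(y + e) % n, Nat.mod_lt _ hn0⟩ : Fin n) ∈ _
      rw [hfe]
      simp only [coe_filter, Set.mem_setOf_eq, mem_filter, mem_univ, true_and]
      exact hmap y hy h
    · intro y1 h1 y2 h2 hf
      have hy1 : y1 < 2 ^ Q - tt := mem_range.mp (Finset.mem_filter.mp h1).1
      have hy2 : y2 < 2 ^ Q - tt := mem_range.mp (Finset.mem_filter.mp h2).1
      have hb1 : y1 + e < n := by omega
      have hb2 : y2 + e < n := by omega
      have := congrArg Fin.val hf
      simp only at this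
      rw [Nat.mod_eq_of_lt hb1, Nat.mod_eq_of_lt hb2] at this
      omega

end Binary

section Instances

def L5 : Fin 5 → Fin 4 → ZMod 3 := ![![1,0,0,0],![0,1,0,0],![0,0,1,0],![0,0,0,1],![1,1,1,1]]

def L4 : Fin 4 → Fin 3 → ZMod 3 := ![![1,0,0],![0,1,0],![0,0,1],![1,1,1]]

def tbl4 : List ℕ := [5, 13, 10, 11, 0, 9, 12, 1, 2, 6, 9, 3, 8, 2, 14, 10, 4, 7, 1, 8, 0, 7, 5, 4, 3, 6, 11, 8, 4, 14, 2, 10, 7, 6, 9, 3, 0, 7, 5, 4, 3, 6, 1, 14, 8, 9, 2, 13, 12, 11, 1, 5, 0, 10, 7, 12, 1, 3, 6, 5, 0, 8, 4, 11, 10, 2, 9, 1, 0, 13, 5, 12, 4, 3, 6, 10, 13, 8, 2, 7, 9]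

def tbl3 : List ℕ := [0, 7, 5, 3, 1, 8, 6, 4, 2, 1, 8, 3, 4, 2, 6, 7, 5, 0, 2, 6, 4, 5, 0, 7, 8, 3, 1]

def idx4 (a : Fin 4 → ZMod 3) : ℕ :=
  (a 0).val + 3 * (a 1).val + 9 * (a 2).val + 27 * (a 3).val

def idx3 (a : Fin 3 → ZMod 3) : ℕ :=
  (a 0).val + 3 * (a 1).val + 9 * (a 2).val

def cls4 (a : Fin 4 → ZMod 3) : Fin 16 :=
  ⟨(tbl4.getD (idx4 a) 0) % 16, Nat.mod_lt _ (by norm_num)⟩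

def cls3 (a : Fin 3 → ZMod 3) : Fin 16 :=
  ⟨(tbl3.getD (idx3 a) 0) % 16, Nat.mod_lt _ (by norm_num)⟩

set_option maxRecDepth 100000 in
lemma hwt2_4 : ∀ d : Fin 4 → ZMod 3, d ≠ 0 →
    2 ≤ (univ.filter fun j : Fin 5 => tip (L5 j) d ≠ 0).card := by decide

set_option maxRecDepth 100000 in
lemma hwt2_3 : ∀ d : Fin 3 → ZMod 3, d ≠ 0 →
    2 ≤ (univ.filter fun j : Fin 4 => tip (L4 j) d ≠ 0).card := by decide

set_option maxRecDepth 1000000 in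
set_option maxHeartbeats 4000000 in
lemma hcls_4 : ∀ d : Fin 4 → ZMod 3, d ≠ 0 →
    (univ.filter fun j : Fin 5 => tip (L5 j) d ≠ 0).card ≤ 3 →
    ∀ a : Fin 4 → ZMod 3, cls4 a ≠ cls4 (a + d) := by decide

set_option maxRecDepth 1000000 in
set_option maxHeartbeats 4000000 in
lemma hcls_3 : ∀ d : Fin 3 → ZMod 3, d ≠ 0 →
    (univ.filter fun j : Fin 4 => tip (L4 j) d ≠ 0).card ≤ 3 →
    ∀ a : Fin 3 → ZMod 3, cls3 a ≠ cls3 (a + d) := by decide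

set_option maxRecDepth 1000000 in
set_option maxHeartbeats 8000000 in
lemma hTsurj_4 : ∀ S : Finset (Fin 5), S.card ≤ 3 →
    Function.Surjective (fun (a : Fin 4 → ZMod 3) (j : ↥S) => tip (L5 j.val) a) := by
  decide

set_option maxRecDepth 1000000 in
set_option maxHeartbeats 8000000 in
lemma hTsurj_3 : ∀ S : Finset (Fin 4), S.card ≤ 3 →
    Function.Surjective (fun (a : Fin 3 → ZMod 3) (j : ↥S) => tip (L4 j.val) a) := by
  decide

lemma exists_binary_params (n : ℕ) (hn : 16 ≤ n) :
    ∃ Q e tt : ℕ, 4 ≤ e ∧ tt ≤ 3 ∧ (4 + tt) * 2 ≤ 2 ^ Q ∧ n + tt = e + 2 ^ Q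
      ∧ e ≤ 2 ^ Q := by
  set Q := Nat.log 2 (n - 1) with hQ
  have h1 : 2 ^ Q ≤ n - 1 := Nat.pow_log_le_self 2 (by omega)
  have h2 : n - 1 < 2 ^ (Q + 1) := Nat.lt_pow_succ_log_self (by norm_num) _
  have hp : 2 ^ (Q + 1) = 2 * 2 ^ Q := by ring
  have hQ3 : 3 ≤ Q := by
    by_contra h
    push_neg at h
    have : 2 ^ (Q + 1) ≤ 2 ^ 3 := Nat.pow_le_pow_right (by norm_num) (by omega)
    simp only [Nat.pow_succ] at this
    omega
  have h8 : 8 ≤ 2 ^ Q := by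
    calc (8 : ℕ) = 2 ^ 3 := by norm_num
      _ ≤ 2 ^ Q := Nat.pow_le_pow_right (by norm_num) hQ3
  by_cases hd : 4 ≤ n - 2 ^ Q
  · exact ⟨Q, n - 2 ^ Q, 0, by omega, by omega, by omega, by omega, by omega⟩
  · have hQ4 : 4 ≤ Q := by
      by_contra h
      push_neg at h
      have : 2 ^ Q ≤ 2 ^ 3 := Nat.pow_le_pow_right (by norm_num) (by omega)
      omega
    have h16 : 16 ≤ 2 ^ Q := by
      calc (16 : ℕ) = 2 ^ 4 := by norm_num
        _ ≤ 2 ^ Q := Nat.pow_le_pow_right (by norm_num) hQ4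
    exact ⟨Q, 4, 4 - (n - 2 ^ Q), by omega, by omega, by omega, by omega, by omega⟩

end Instances


/-- For every `n ≥ 16` there exist an
`IrMOA(r₁, 5+n, 3⁵2^n, 3)` and an `IrMOA(r₂, 4+n, 3⁴2^n, 3)`. -/
theorem statement9 (n : ℕ) (hn : 16 ≤ n) :
    (∃ (r₁ : ℕ) (C : Fin r₁ → (Fin 5 ⊕ Fin n) → ℕ),
      0 < r₁ ∧ IsIrMOA C (Sum.elim (fun _ => 3) fun _ => 2) 3) ∧
    (∃ (r₂ : ℕ) (C : Fin r₂ → (Fin 4 ⊕ Fin n) → ℕ),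
      0 < r₂ ∧ IsIrMOA C (Sum.elim (fun _ => 3) fun _ => 2) 3) := by
  obtain ⟨Q, e, tt, he4, htt3, hhalf, heq, he2⟩ := exists_binary_params n hn
  constructor
  · exact buildIrMOA (p := Q + 1) hn L5 cls4 (Mmat Q e n) Mmat_zero
      (Mmat_inj he2 heq) (Mmat_B3 he4 htt3 hhalf heq he2) hTsurj_4 hwt2_4
      (fun d hd a hc => by
        by_contra h
        push_neg at h
        exact hcls_4 d hd (by omega) a hc)
  · exact buildIrMOA (p := Q + 1) hn L4 cls3 (Mmat Q e n) Mmat_zero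
      (Mmat_inj he2 heq) (Mmat_B3 he4 htt3 hhalf heq he2) hTsurj_3 hwt2_3
      (fun d hd a hc => by
        by_contra h
        push_neg at h
        exact hcls_3 d hd (by omega) a hc)
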